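/- Every k-equal non-crossing partition of {1,...,kn} can be obtained from the one-block partition 1_k of {1,...,k} by a finite sequence of interval-block insertions Ĩ_{r}^{k} (each inserting an interval block of size k at some position). -/

import Mathlib

open scoped BigOperators Classical

/-- Partitions of `Fin n` (i.e. of `{1,…,n}`). -/
abbrev NCP (n : ℕ) := Finpartition (Finset.univ : Finset (Fin n))

/-- `x` and `y` lie in the same block of `P`. -/
def pRel {n : ℕ} (P : NCP n) (x y : Fin n) : Prop := ∃ t ∈ P.parts, x ∈ t ∧ y ∈ t

/-- `P` is a non-crossing partition. -/
def IsNonCrossing {n : ℕ} (P : NCP n) : Prop :=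
  ∀ a b c d : Fin n, a < b → b < c → c < d → pRel P a c → pRel P b d → pRel P a b

/-- Every block of `P` has exactly `k` elements (`k`-equal). -/
def IsKEqual (k : ℕ) {n : ℕ} (P : NCP n) : Prop := ∀ t ∈ P.parts, t.card = k

/-- Every block of `P` has size divisible by `k` (`k`-divisible). -/
def IsKDivisible (k : ℕ) {n : ℕ} (P : NCP n) : Prop := ∀ t ∈ P.parts, k ∣ t.card

/-- Every block of `P` contains only numbers of one residue class mod `k`. -/
def IsKPreserving (k : ℕ) {n : ℕ} (P : NCP n) : Prop :=
  ∀ t ∈ P.parts, ∀ x ∈ t, ∀ y ∈ t, (x : ℕ) % k = (y : ℕ) % k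

/-- The relation on `{1,…,2n}` obtained by putting `P` on the odd positions and `Q` on
the even positions (0-indexed: `P` on evens, `Q` on odds). -/
def jointRel {n : ℕ} (P Q : NCP n) (x y : Fin (2 * n)) : Prop :=
  ((x : ℕ) % 2 = 0 ∧ (y : ℕ) % 2 = 0 ∧
      pRel P ⟨(x : ℕ) / 2, by have := x.isLt; omega⟩ ⟨(y : ℕ) / 2, by have := y.isLt; omega⟩) ∨
  ((x : ℕ) % 2 = 1 ∧ (y : ℕ) % 2 = 1 ∧
      pRel Q ⟨(x : ℕ) / 2, by have := x.isLt; omega⟩ ⟨(y : ℕ) / 2, by have := y.isLt; omega⟩)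

/-- A symmetric-relation analogue of non-crossing. -/
def RelNonCrossing {m : ℕ} (R : Fin m → Fin m → Prop) : Prop :=
  ∀ a b c d : Fin m, a < b → b < c → c < d → R a c → R b d → R a b

/-- `Q` is the Kreweras complement of `P`: the union `P ∪ Q` (interleaved) is non-crossing and
`Q` is the largest such partition in the reverse refinement order. -/
def IsKr {n : ℕ} (P Q : NCP n) : Prop :=
  RelNonCrossing (jointRel P Q) ∧ ∀ Q' : NCP n, RelNonCrossing (jointRel P Q') → Q' ≤ Q

/-- Position correspondence for the duplication–insertion operation `I_r^j` (1-indexed `r`):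
position `x` of the new partition corresponds to position `a` of the old one. Positions
`r+1,…,r+j-1` (1-indexed) correspond to nothing (they are singletons), and both positions
`r` and `r+j` correspond to the old position `r`. -/
def dRel (j r : ℕ) {n : ℕ} (x : Fin (n + j)) (a : Fin n) : Prop :=
  ((x : ℕ) < r ∧ (a : ℕ) = (x : ℕ)) ∨
  ((x : ℕ) = r - 1 + j ∧ (a : ℕ) = r - 1) ∨
  (r - 1 + j < (x : ℕ) ∧ (a : ℕ) + j = (x : ℕ))

/-- `P'` is obtained from `P` by the duplication–insertion operation `I_r^j`: the element at
(1-indexed) position `r` is duplicated (positions `r` and `r+j` are joined into the block that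
contained `r`) and `j-1` singletons are inserted between them. -/
def IsDupIns {n : ℕ} (j r : ℕ) (P : NCP n) (P' : NCP (n + j)) : Prop :=
  ∀ x y : Fin (n + j), pRel P' x y ↔
    (x = y ∨ ∃ a b : Fin n, dRel j r x a ∧ dRel j r y b ∧ pRel P a b)

/-- Position correspondence for the interval-insertion operation `Ĩ_r^j` (1-indexed `r`):
the new interval block occupies (1-indexed) positions `r,…,r+j-1`. -/
def iRel (j r : ℕ) {n : ℕ} (x : Fin (n + j)) (a : Fin n) : Prop :=
  ((x : ℕ) < r - 1 ∧ (a : ℕ) = (x : ℕ)) ∨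
  (r - 1 + j ≤ (x : ℕ) ∧ (a : ℕ) + j = (x : ℕ))

/-- `P'` is obtained from `P` by the interval-insertion operation `Ĩ_r^j`: a new interval block
of size `j` is inserted between (1-indexed) positions `r-1` and `r`. -/
def IsIntIns {n : ℕ} (j r : ℕ) (P : NCP n) (P' : NCP (n + j)) : Prop :=
  ∀ x y : Fin (n + j), pRel P' x y ↔
    ((r - 1 ≤ (x : ℕ) ∧ (x : ℕ) < r - 1 + j ∧ r - 1 ≤ (y : ℕ) ∧ (y : ℕ) < r - 1 + j) ∨
      ∃ a b : Fin n, iRel j r x a ∧ iRel j r y b ∧ pRel P a b)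

/-- Partitions of `{1,…,kn}` reachable from the one-block partition `1_k` of `{1,…,k}` by a
finite sequence of interval-block insertions `Ĩ_r^k`. -/
inductive ReachK (k : ℕ) : (n : ℕ) → NCP (k * n) → Prop
  | base (P : NCP (k * 1)) (h : ∀ x y : Fin (k * 1), pRel P x y) : ReachK k 1 P
  | step (n r : ℕ) (P : NCP (k * n)) (P' : NCP (k * n + k)) (hr : 1 ≤ r)
      (hr' : r ≤ k * n + 1) (hP : ReachK k n P) (h : IsIntIns k r P P') :
      ReachK k (n + 1) P'

lemma pRel_iff_mem {m : ℕ} (P : NCP m) (x y : Fin m) : pRel P x y ↔ y ∈ P.part x := by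
  constructor
  · rintro ⟨s, hs, hx, hy⟩; rwa [P.part_eq_of_mem hs hx]
  · intro h
    exact ⟨P.part x, P.part_mem.2 (Finset.mem_univ x), P.mem_part (Finset.mem_univ x), h⟩

lemma pRel_refl {m : ℕ} (P : NCP m) (x : Fin m) : pRel P x x :=
  ⟨P.part x, P.part_mem.2 (Finset.mem_univ x), P.mem_part (Finset.mem_univ x),
    P.mem_part (Finset.mem_univ x)⟩

lemma pRel_symm {m : ℕ} (P : NCP m) {x y : Fin m} (h : pRel P x y) : pRel P y x := by
  obtain ⟨s, hs, hx, hy⟩ := h; exact ⟨s, hs, hy, hx⟩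

lemma pRel_trans {m : ℕ} (P : NCP m) {x y z : Fin m} (h1 : pRel P x y) (h2 : pRel P y z) :
    pRel P x z := by
  obtain ⟨s, hs, hx, hy⟩ := h1
  obtain ⟨s', hs', hy', hz⟩ := h2
  exact ⟨s, hs, hx, (P.eq_of_mem_parts hs' hs hy' hy) ▸ hz⟩

lemma exists_interval_block {m : ℕ} (hm : 0 < m) (P : NCP m) (hP : IsNonCrossing P) :
    ∃ t, ∃ _ : t ∈ P.parts, ∃ hne : t.Nonempty, ∀ x : Fin m,
      x ∈ t ↔ (t.min' hne ≤ x ∧ x ≤ t.max' hne) := by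
  classical
  obtain ⟨t0, ht0, _⟩ := P.exists_mem (Finset.mem_univ (⟨0, hm⟩ : Fin m))
  obtain ⟨t, ht, hminspan⟩ := P.parts.exists_min_image
    (fun s => if h : s.Nonempty then ((s.max' h : ℕ) - (s.min' h : ℕ)) else 0) ⟨t0, ht0⟩
  have hne : t.Nonempty := P.nonempty_of_mem_parts ht
  refine ⟨t, ht, hne, fun x => ⟨fun hx => ⟨t.min'_le x hx, t.le_max' x hx⟩, ?_⟩⟩
  rintro ⟨h1, h2⟩
  by_contra hx
  have hminmem := t.min'_mem hne
  have hmaxmem := t.max'_mem hne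
  have h1' : t.min' hne < x := lt_of_le_of_ne h1 (fun h => hx (by rw [← h]; exact hminmem))
  have h2' : x < t.max' hne := lt_of_le_of_ne h2 (fun h => hx (by rw [h]; exact hmaxmem))
  have ht' : P.part x ∈ P.parts := P.part_mem.2 (Finset.mem_univ x)
  have hxt' : x ∈ P.part x := P.mem_part (Finset.mem_univ x)
  have htt' : t ≠ P.part x := fun h => hx (by rw [h]; exact hxt')
  have hdisj : ∀ y, y ∈ P.part x → y ∉ t := fun y hy hyt =>
    htt' (P.eq_of_mem_parts ht ht' hyt hy)
  have hkey : ∀ y ∈ P.part x, t.min' hne < y ∧ y < t.max' hne := by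
    intro y hy
    have hymem : y ∉ t := hdisj y hy
    constructor
    · have hy1 : ¬ y < t.min' hne := by
        intro h
        have hrel : pRel P y (t.min' hne) :=
          hP y (t.min' hne) x (t.max' hne) h h1' h2'
            ⟨P.part x, ht', hy, hxt'⟩ ⟨t, ht, hminmem, hmaxmem⟩
        obtain ⟨s, hs, hys, hmins⟩ := hrel
        have hst' : s = P.part x := P.eq_of_mem_parts hs ht' hys hy
        exact hdisj _ (hst' ▸ hmins) hminmem
      have hy2 : y ≠ t.min' hne := fun h => hymem (by rw [h]; exact hminmem)
      exact lt_of_le_of_ne (le_of_not_gt hy1) (Ne.symm hy2)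
    · have hy1 : ¬ t.max' hne < y := by
        intro h
        have hrel : pRel P (t.min' hne) x :=
          hP (t.min' hne) x (t.max' hne) y h1' h2' h
            ⟨t, ht, hminmem, hmaxmem⟩ ⟨P.part x, ht', hxt', hy⟩
        obtain ⟨s, hs, hmins, hxs⟩ := hrel
        have hst : s = t := P.eq_of_mem_parts hs ht hmins hminmem
        exact hx (hst ▸ hxs)
      have hy2 : y ≠ t.max' hne := fun h => hymem (by rw [h]; exact hmaxmem)
      exact lt_of_le_of_ne (le_of_not_gt hy1) hy2
  have hne' : (P.part x).Nonempty := ⟨x, hxt'⟩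
  have hmin' := hminspan (P.part x) ht'
  rw [dif_pos hne, dif_pos hne'] at hmin'
  have ha := hkey _ ((P.part x).min'_mem hne')
  have hb := hkey _ ((P.part x).max'_mem hne')
  have hc : (P.part x).min' hne' ≤ (P.part x).max' hne' :=
    (P.part x).min'_le _ ((P.part x).max'_mem hne')
  rw [Fin.lt_def] at h1' h2'
  simp only [Fin.lt_def] at ha hb
  rw [Fin.le_def] at hc
  omega

lemma step_main (k n' : ℕ) (P : NCP (k * n' + k))
    (hP : IsNonCrossing P) (hE : IsKEqual k P)
    (t : Finset (Fin (k * n' + k))) (ht : t ∈ P.parts) (L : ℕ)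
    (hLk : L + k ≤ k * n' + k)
    (hmem : ∀ x : Fin (k * n' + k), x ∈ t ↔ L ≤ (x : ℕ) ∧ (x : ℕ) < L + k) :
    ∃ Q : NCP (k * n'), IsNonCrossing Q ∧ IsKEqual k Q ∧ IsIntIns k (L + 1) Q P := by
  classical
  have hbound : ∀ a : Fin (k * n'),
      (if (a : ℕ) < L then (a : ℕ) else (a : ℕ) + k) < k * n' + k := by
    intro a; have := a.isLt; split <;> omega
  set f : Fin (k * n') → Fin (k * n' + k) :=
    fun a => ⟨if (a : ℕ) < L then (a : ℕ) else (a : ℕ) + k, hbound a⟩ with hfdef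
  have hfval : ∀ a, (f a : ℕ) = if (a : ℕ) < L then (a : ℕ) else (a : ℕ) + k := fun a => rfl
  have hfnott : ∀ a, f a ∉ t := by
    intro a hmem'
    rw [hmem, hfval] at hmem'
    have := a.isLt
    split at hmem' <;> omega
  have hiRel : ∀ (x : Fin (k * n' + k)) (a : Fin (k * n')),
      iRel k (L + 1) x a ↔ ((f a : ℕ) = (x : ℕ)) := by
    intro x a
    have hx := x.isLt; have ha := a.isLt
    simp only [iRel, hfval]
    split <;> omega
  have hsurj : ∀ x : Fin (k * n' + k), x ∉ t → ∃ a : Fin (k * n'), (f a : ℕ) = (x : ℕ) := by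
    intro x hx
    rw [hmem] at hx
    have hxv := x.isLt
    rcases lt_or_ge (x : ℕ) L with h | h
    · refine ⟨⟨(x : ℕ), by omega⟩, ?_⟩
      rw [hfval]
      show (if ((x : ℕ)) < L then ((x : ℕ)) else (x : ℕ) + k) = (x : ℕ)
      rw [if_pos h]
    · have h' : L + k ≤ (x : ℕ) := by omega
      refine ⟨⟨(x : ℕ) - k, by omega⟩, ?_⟩
      rw [hfval]
      show (if ((x : ℕ) - k) < L then ((x : ℕ) - k) else (x : ℕ) - k + k) = (x : ℕ)
      rw [if_neg (by omega)]
      omega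
  have hblock : ∀ x y : Fin (k * n' + k), x ∈ t → pRel P x y → y ∈ t := by
    rintro x y hx ⟨s, hs, hxs, hys⟩
    rwa [P.eq_of_mem_parts hs ht hxs hx] at hys
  have hpt : ∀ x y : Fin (k * n' + k), x ∈ t → y ∈ t → pRel P x y :=
    fun x y hx hy => ⟨t, ht, hx, hy⟩
  have hequiv : Equivalence (fun a b : Fin (k * n') => pRel P (f a) (f b)) :=
    ⟨fun a => pRel_refl P (f a), fun h => pRel_symm P h, fun h1 h2 => pRel_trans P h1 h2⟩
  set S : Setoid (Fin (k * n')) := ⟨_, hequiv⟩ with hSdef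
  set Q : NCP (k * n') := Finpartition.ofSetoid S with hQdef
  have hQrel : ∀ a b : Fin (k * n'), pRel Q a b ↔ pRel P (f a) (f b) := by
    intro a b
    rw [pRel_iff_mem, hQdef]
    exact Finpartition.mem_part_ofSetoid_iff_rel
  have hfmono : ∀ a b : Fin (k * n'), a < b → f a < f b := by
    intro a b hab
    rw [Fin.lt_def] at hab ⊢
    rw [hfval, hfval]
    split <;> split <;> omega
  have hfinj : ∀ a b : Fin (k * n'), f a = f b → a = b := by
    intro a b hab
    have : (f a : ℕ) = (f b : ℕ) := by rw [hab]
    rw [hfval, hfval] at this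
    apply Fin.ext
    split at this <;> split at this <;> omega
  refine ⟨Q, ?_, ?_, ?_⟩
  · intro a b c d hab hbc hcd hac hbd
    exact (hQrel a b).2 (hP _ _ _ _ (hfmono _ _ hab) (hfmono _ _ hbc) (hfmono _ _ hcd)
      ((hQrel a c).1 hac) ((hQrel b d).1 hbd))
  · intro s hs
    obtain ⟨a, ha⟩ := Q.nonempty_of_mem_parts hs
    have hsa : s = Q.part a := (Q.part_eq_of_mem hs ha).symm
    have hcard : (P.part (f a)).card = k := hE _ (P.part_mem.2 (Finset.mem_univ _))
    rw [hsa]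
    have hbij : (Finpartition.part Q a).card = (Finpartition.part P (f a)).card := by
      apply Finset.card_bij (fun b _ => f b)
      · intro b hb
        rw [← pRel_iff_mem]
        exact (hQrel a b).1 ((pRel_iff_mem Q a b).2 hb)
      · intro b1 _ b2 _ h
        exact hfinj _ _ h
      · intro y hy
        have hrel : pRel P (f a) y := (pRel_iff_mem P (f a) y).2 hy
        have hynt : y ∉ t := by
          intro hyt
          exact hfnott a (hblock y (f a) hyt (pRel_symm P hrel))
        obtain ⟨b, hb⟩ := hsurj y hynt
        have hfb : f b = y := Fin.ext hb
        refine ⟨b, ?_, hfb⟩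
        exact (pRel_iff_mem Q a b).1 ((hQrel a b).2 (by rw [hfb]; exact hrel))
    rw [hbij, hcard]
  · intro x y
    constructor
    · intro h
      by_cases hx : x ∈ t
      · left
        have hy := hblock x y hx h
        rw [hmem] at hx hy
        omega
      · right
        have hy : y ∉ t := fun hy => hx (hblock y x hy (pRel_symm P h))
        obtain ⟨a, hav⟩ := hsurj x hx
        obtain ⟨b, hbv⟩ := hsurj y hy
        refine ⟨a, b, (hiRel x a).2 hav, (hiRel y b).2 hbv, (hQrel a b).2 ?_⟩
        rw [Fin.ext hav, Fin.ext hbv]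
        exact h
    · rintro (⟨h1, h2, h3, h4⟩ | ⟨a, b, hxa, hyb, hab⟩)
      · exact hpt x y ((hmem x).2 (by omega)) ((hmem y).2 (by omega))
      · have hfa : f a = x := Fin.ext ((hiRel x a).1 hxa)
        have hfb : f b = y := Fin.ext ((hiRel y b).1 hyb)
        rw [← hfa, ← hfb]
        exact (hQrel a b).1 hab

/-- Every `k`-equal non-crossing partition of `{1,…,kn}` is obtained from the one-block
partition of `{1,…,k}` by a finite sequence of interval-block insertions of size `k`. -/
theorem stmt13 (k n : ℕ) (hk : 0 < k) (hn : 1 ≤ n) (P : NCP (k * n))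
    (hP : IsNonCrossing P) (hE : IsKEqual k P) : ReachK k n P := by
  revert hn P
  induction n with
  | zero => intro hn; omega
  | succ n' ih =>
    intro _ P hP hE
    rcases Nat.eq_zero_or_pos n' with h0 | hpos
    · subst h0
      refine ReachK.base P ?_
      intro x y
      have hcard : (P.part x).card = k := hE _ (P.part_mem.2 (Finset.mem_univ x))
      have huniv : P.part x = Finset.univ := Finset.eq_univ_of_card _ (by
        rw [hcard, Fintype.card_fin]; ring)
      exact ⟨P.part x, P.part_mem.2 (Finset.mem_univ x), P.mem_part (Finset.mem_univ x),
        by rw [huniv]; exact Finset.mem_univ y⟩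
    · have hm : 0 < k * (n' + 1) := Nat.mul_pos hk (by omega)
      obtain ⟨t, ht, hne, hiv⟩ := exists_interval_block hm P hP
      have hcardt : t.card = k := hE t ht
      set L : ℕ := ((t.min' hne : ℕ)) with hLdef
      set U : ℕ := ((t.max' hne : ℕ)) with hUdef
      have hLU : L ≤ U := Fin.le_def.mp (t.min'_le _ (t.max'_mem hne))
      have hUlt : U < k * n' + k := (t.max' hne).isLt
      have himg : t.image Fin.val = Finset.Icc L U := by
        ext v
        simp only [Finset.mem_image, Finset.mem_Icc]
        constructor
        · rintro ⟨x, hx, rfl⟩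
          rw [hiv] at hx
          exact ⟨Fin.le_def.mp hx.1, Fin.le_def.mp hx.2⟩
        · rintro ⟨hv1, hv2⟩
          refine ⟨⟨v, by omega⟩, ?_, rfl⟩
          rw [hiv]
          exact ⟨Fin.le_def.mpr hv1, Fin.le_def.mpr hv2⟩
      have hUL : U + 1 - L = k := by
        rw [← Nat.card_Icc, ← himg, Finset.card_image_of_injective _ Fin.val_injective, hcardt]
      have hLk : L + k ≤ k * n' + k := by omega
      have hmem : ∀ x : Fin (k * n' + k), x ∈ t ↔ L ≤ (x : ℕ) ∧ (x : ℕ) < L + k := by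
        intro x
        rw [hiv x]
        simp only [Fin.le_def]
        omega
      obtain ⟨Q, hQnc, hQke, hQins⟩ := step_main k n' P hP hE t ht L hLk hmem
      exact ReachK.step n' (L + 1) Q P (by omega) (by omega) (ih hpos Q hQnc hQke) hQins
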